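/- With {λᵢ} a basis for M/N and λ_{î(k)} the induced basis elements of M_{k−1}/N, one has Σ_{î(k) ∈ I^k} λ*_{î(k)} e_{[−1,k−1]} λ_{î(k)} = 1 for all k ≥ 1. -/
import Mathlib


/- STATEMENT 17: With {λᵢ} a basis for M/N and λ_{î(k)} the induced basis elements of
M_{k−1}/N, one has Σ_{î(k) ∈ I^k} λ*_{î(k)} e_{[−1,k−1]} λ_{î(k)} = 1 for all k ≥ 1.

Here λ_{î(k)} = τ^{−k(k−1)/4} λ_{i₁} e₁ λ_{i₂} (e₂e₁) λ_{i₃} ⋯ (e_{k−1}⋯e₁) λ_{i_k},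
and e_{[−1,k−1]} is the projection implementing E_N : M_{k−1} → N, defined recursively
by e_{[−1,0]} = e₁ and e_{[−1,n+1]} = τ^{−(n+1)}(e_{n+2}⋯e_{2n+3}) e_{[−1,n]}
(e_{2n+2}⋯e_{n+2}).  Tower convention: Mt 0 = N, Mt 1 = M, Mt (j+1) = Mⱼ. -/

/-- the descending product e_j e_{j-1} ⋯ e_1 (empty for j = 0) -/
noncomputable def descp {A : Type*} [Ring A] (e : ℕ → A) (j : ℕ) : A :=
  ((List.range j).reverse.map (fun t => e (t + 1))).prod

/-- λ_{î(k)} = τ^{-k(k-1)/4} λ_{i₁} e₁ λ_{i₂} (e₂e₁) λ_{i₃} ⋯ (e_{k-1}⋯e₁) λ_{i_k} -/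
noncomputable def lamhat {A : Type*} [Ring A] [Algebra ℂ A] (τ : ℝ) (e : ℕ → A)
    {nI : ℕ} (l : Fin nI → A) (k : ℕ) (ii : Fin k → Fin nI) : A :=
  ((((Real.sqrt τ) ^ (k * (k - 1) / 2))⁻¹ : ℝ) : ℂ) •
    ((List.finRange k).map (fun j => descp e j.val * l (ii j))).prod

/-- e_{[−1,n]} -/
noncomputable def ebr {A : Type*} [Ring A] [Algebra ℂ A] (τ : ℂ) (e : ℕ → A) : ℕ → A
  | 0 => e 1
  | n + 1 =>
      (τ ^ (n + 1))⁻¹ •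
        (((List.range (n + 2)).map (fun t => e (n + 2 + t))).prod *
          ebr τ e n *
          ((List.range (n + 1)).map (fun t => e (2 * n + 2 - t))).prod)

/-! ### Auxiliary ascending/descending products -/

section AuxProd
variable {A : Type*} [Ring A]

/-- ascending product e_a e_{a+1} ⋯ e_{a+m-1} -/
noncomputable def asc (e : ℕ → A) (a m : ℕ) : A :=
  ((List.range m).map (fun t => e (a + t))).prod

/-- descending product e_{a+m-1} ⋯ e_{a+1} e_a -/
noncomputable def dsc (e : ℕ → A) (a m : ℕ) : A :=
  (((List.range m).reverse).map (fun t => e (a + t))).prod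

lemma asc_zero (e : ℕ → A) (a : ℕ) : asc e a 0 = 1 := rfl
lemma dsc_zero (e : ℕ → A) (a : ℕ) : dsc e a 0 = 1 := rfl

lemma asc_succ (e : ℕ → A) (a m : ℕ) : asc e a (m + 1) = asc e a m * e (a + m) := by
  simp [asc, List.range_succ]

lemma dsc_succ (e : ℕ → A) (a m : ℕ) : dsc e a (m + 1) = e (a + m) * dsc e a m := by
  simp [dsc, List.range_succ]

lemma dsc_one (e : ℕ → A) (a : ℕ) : dsc e a 1 = e a := by
  simp [dsc, List.range_succ]

lemma asc_concat (e : ℕ → A) (a m : ℕ) : ∀ p, asc e a (m + p) = asc e a m * asc e (a + m) p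
  | 0 => by simp [asc_zero]
  | p + 1 => by
      rw [show m + (p + 1) = (m + p) + 1 from rfl, asc_succ, asc_concat e a m p, asc_succ,
        mul_assoc, Nat.add_assoc]

lemma dsc_concat (e : ℕ → A) (a m : ℕ) : ∀ p, dsc e a (m + p) = dsc e (a + m) p * dsc e a m
  | 0 => by simp [dsc_zero]
  | p + 1 => by
      rw [show m + (p + 1) = (m + p) + 1 from rfl, dsc_succ, dsc_concat e a m p, dsc_succ,
        ← mul_assoc, Nat.add_assoc]

lemma prod_desc_range (e : ℕ → A) : ∀ (m a : ℕ),
    ((List.range m).map (fun t => e (a + m - 1 - t))).prod = dsc e a m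
  | 0, a => by simp [dsc_zero]
  | m + 1, a => by
      have h1 : (fun t => e (a + (m + 1) - 1 - t)) = (fun t => e ((a + 1) + m - 1 - t)) := by
        funext t; congr 1; omega
      have h2 : (a + 1) + m - 1 - m = a := by omega
      rw [h1, List.range_succ, List.map_append, List.prod_append, prod_desc_range e m (a + 1)]
      simp only [List.map_cons, List.map_nil, List.prod_cons, List.prod_nil, mul_one, h2]
      conv_rhs => rw [show m + 1 = 1 + m by omega, dsc_concat e a 1 m, dsc_one]

lemma descp_eq (e : ℕ → A) (j : ℕ) : descp e j = dsc e 1 j := by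
  simp [descp, dsc, Nat.add_comm]

end AuxProd

/-! ### Context-dependent lemmas -/

section Ctx
set_option linter.unusedSectionVars false
variable {A : Type*} [Ring A] [StarRing A] [Algebra ℂ A] [StarModule ℂ A]
variable {Mt : ℕ → StarSubalgebra ℂ A} {e : ℕ → A}

set_option linter.unusedSectionVars false in
lemma star_dsc (hestar : ∀ j, 1 ≤ j → star (e j) = e j) {a : ℕ} (ha : 1 ≤ a) :
    ∀ m, star (dsc e a m) = asc e a m
  | 0 => by simp [dsc_zero, asc_zero]
  | m + 1 => by
      rw [dsc_succ, star_mul, star_dsc hestar ha m, hestar _ (by omega), asc_succ]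

lemma comm_e (hmono : Monotone Mt)
    (hecomm : ∀ j, 1 ≤ j → ∀ x ∈ Mt (j - 1), e j * x = x * e j)
    {n : ℕ} {x : A} (hx : x ∈ Mt n) {j : ℕ} (hj : n + 1 ≤ j) : e j * x = x * e j :=
  hecomm j (by omega) x (hmono (by omega) hx)

lemma comm_asc (hmono : Monotone Mt)
    (hecomm : ∀ j, 1 ≤ j → ∀ x ∈ Mt (j - 1), e j * x = x * e j)
    {n : ℕ} {x : A} (hx : x ∈ Mt n) {a : ℕ} (ha : n + 1 ≤ a) :
    ∀ m, x * asc e a m = asc e a m * x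
  | 0 => by simp [asc_zero]
  | m + 1 => by
      rw [asc_succ, ← mul_assoc, comm_asc hmono hecomm hx ha m, mul_assoc,
        ← comm_e hmono hecomm hx (show n + 1 ≤ a + m by omega), ← mul_assoc]

lemma comm_dsc (hmono : Monotone Mt)
    (hecomm : ∀ j, 1 ≤ j → ∀ x ∈ Mt (j - 1), e j * x = x * e j)
    {n : ℕ} {x : A} (hx : x ∈ Mt n) {a : ℕ} (ha : n + 1 ≤ a) :
    ∀ m, dsc e a m * x = x * dsc e a m
  | 0 => by simp [dsc_zero]
  | m + 1 => by
      rw [dsc_succ, mul_assoc, comm_dsc hmono hecomm hx ha m, ← mul_assoc,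
        comm_e hmono hecomm hx (show n + 1 ≤ a + m by omega), mul_assoc]

lemma dsc_mem (hmono : Monotone Mt) (hemem : ∀ j, 1 ≤ j → e j ∈ Mt (j + 1))
    {a : ℕ} (ha : 1 ≤ a) : ∀ m, dsc e a m ∈ Mt (a + m)
  | 0 => by rw [dsc_zero]; exact one_mem _
  | m + 1 => by
      rw [dsc_succ]
      exact mul_mem (hemem (a + m) (by omega))
        (hmono (by omega) (dsc_mem hmono hemem ha m))

set_option linter.unusedSectionVars false in
lemma ascdsc (τ : ℂ) (hTL1 : ∀ j, 1 ≤ j → e j * e (j + 1) * e j = τ • e j) :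
    ∀ m, asc e 1 (m + 1) * dsc e 1 m = (τ ^ m) • e 1
  | 0 => by simp [asc_succ, asc_zero, dsc_zero]
  | m + 1 => by
      rw [asc_succ, dsc_succ, asc_succ, show 1 + (m + 1) = (1 + m) + 1 from rfl]
      have hkey : e (1 + m) * e ((1 + m) + 1) * e (1 + m) = τ • e (1 + m) :=
        hTL1 (1 + m) (by omega)
      calc asc e 1 m * e (1 + m) * e ((1 + m) + 1) * (e (1 + m) * dsc e 1 m)
          = asc e 1 m * (e (1 + m) * e ((1 + m) + 1) * e (1 + m)) * dsc e 1 m := by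
            simp only [mul_assoc]
        _ = asc e 1 m * (τ • e (1 + m)) * dsc e 1 m := by rw [hkey]
        _ = τ • (asc e 1 (m + 1) * dsc e 1 m) := by
            rw [asc_succ]; simp only [mul_smul_comm, smul_mul_assoc]
        _ = τ ^ (m + 1) • e 1 := by
            rw [ascdsc τ hTL1 m, smul_smul, ← pow_succ']

end Ctx

lemma tri_succ (k : ℕ) : (k + 1) * k / 2 = k * (k - 1) / 2 + k := by
  rcases k with _ | j
  · rfl
  · obtain ⟨c, hc⟩ := Nat.even_mul_succ_self j
    have h2 : (j + 1) * j = c + c := by rw [Nat.mul_comm]; exact hc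
    have h3 : (j + 1 + 1) * (j + 1) = (j + 1) * j + 2 * (j + 1) := by ring
    rw [h2] at h3
    have h4 : (j + 1) * (j + 1 - 1) = c + c := by simpa using h2
    rw [h3, h4]
    omega

lemma ebr_eq {A : Type*} [Ring A] [Algebra ℂ A] (τ : ℂ) (e : ℕ → A) (n : ℕ) :
    ebr τ e (n + 1) = (τ ^ (n + 1))⁻¹ •
      (asc e (n + 2) (n + 2) * ebr τ e n * dsc e (n + 2) (n + 1)) := by
  rw [ebr]
  have hB : ((List.range (n + 1)).map (fun t => e (2 * n + 2 - t))).prod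
      = dsc e (n + 2) (n + 1) := by
    have h : (fun t => e (2 * n + 2 - t)) = (fun t => e ((n + 2) + (n + 1) - 1 - t)) := by
      funext t; congr 1; omega
    rw [h, prod_desc_range]
  rw [hB]
  rfl

lemma lamhat_snoc {A : Type*} [Ring A] [Algebra ℂ A] (τ : ℝ) (e : ℕ → A)
    {nI : ℕ} (l : Fin nI → A) (k : ℕ) (f : Fin k → Fin nI) (a : Fin nI) :
    lamhat τ e l (k + 1) (Fin.snoc f a) =
      (((Real.sqrt τ ^ k)⁻¹ : ℝ) : ℂ) • (lamhat τ e l k f * (descp e k * l a)) := by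
  unfold lamhat
  rw [List.finRange_succ_last, List.map_append, List.prod_append, List.map_map]
  simp only [Function.comp_def, Fin.snoc_castSucc, Fin.coe_castSucc]
  simp only [List.map_cons, List.map_nil, List.prod_cons, List.prod_nil, mul_one,
    Fin.snoc_last, Fin.val_last]
  rw [smul_mul_assoc, smul_smul]
  congr 1
  rw [← Complex.ofReal_mul]
  congr 1
  rw [Nat.add_sub_cancel, tri_succ, pow_add, mul_inv]
  ring

lemma lamhat_mem {A : Type*} [Ring A] [StarRing A] [Algebra ℂ A] [StarModule ℂ A]
    {Mt : ℕ → StarSubalgebra ℂ A} {e : ℕ → A}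
    (hmono : Monotone Mt) (hemem : ∀ j, 1 ≤ j → e j ∈ Mt (j + 1))
    {nI : ℕ} {l : Fin nI → A} (hl : ∀ i, l i ∈ Mt 1) (τ : ℝ)
    (k : ℕ) (ii : Fin (k + 1) → Fin nI) : lamhat τ e l (k + 1) ii ∈ Mt (k + 1) := by
  unfold lamhat
  refine SMulMemClass.smul_mem _ ?_
  have key : ∀ L : List (Fin (k + 1)),
      ((L.map (fun j => descp e j.val * l (ii j))).prod) ∈ Mt (k + 1) := by
    intro L
    induction L with
    | nil => simpa using one_mem (Mt (k + 1))
    | cons j L ihL =>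
        rw [List.map_cons, List.prod_cons]
        refine mul_mem (mul_mem ?_ (hmono (by omega) (hl (ii j)))) ihL
        rw [descp_eq]
        exact hmono (show 1 + j.val ≤ k + 1 by have := j.isLt; omega)
          (dsc_mem hmono hemem le_rfl j.val)
  exact key _

theorem stmt17 {A : Type*} [Ring A] [StarRing A] [Algebra ℂ A] [StarModule ℂ A]
    (Mt : ℕ → StarSubalgebra ℂ A) (hmono : Monotone Mt)
    (e : ℕ → A) (τ : ℝ) (hτ : 0 < τ)
    (hemem : ∀ j, 1 ≤ j → e j ∈ Mt (j + 1))
    (heproj : ∀ j, 1 ≤ j → e j * e j = e j)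
    (hestar : ∀ j, 1 ≤ j → star (e j) = e j)
    (hTL1 : ∀ j, 1 ≤ j → e j * e (j + 1) * e j = (τ : ℂ) • e j)
    (hTL2 : ∀ j, 1 ≤ j → e (j + 1) * e j * e (j + 1) = (τ : ℂ) • e (j + 1))
    (hTLc : ∀ i j, 1 ≤ i → i + 2 ≤ j → e i * e j = e j * e i)
    (EE : ℕ → (A →ₗ[ℂ] A))
    (hEEmem : ∀ j, 1 ≤ j → ∀ x : A, EE j x ∈ Mt (j - 1))
    (hEEfix : ∀ j, 1 ≤ j → ∀ x ∈ Mt (j - 1), EE j x = x)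
    (hjones : ∀ j, 1 ≤ j → ∀ x ∈ Mt j, e j * x * e j = EE j x * e j)
    (hecomm : ∀ j, 1 ≤ j → ∀ x ∈ Mt (j - 1), e j * x = x * e j)
    (nI : ℕ) (l : Fin nI → A) (hl : ∀ i, l i ∈ Mt 1)
    (hbasis : ∑ i, star (l i) * e 1 * l i = 1) :
    ∀ k : ℕ, 1 ≤ k →
      ∑ ii : Fin k → Fin nI,
        star (lamhat τ e l k ii) * ebr (τ : ℂ) e (k - 1) * lamhat τ e l k ii = 1 := by
  have hτc : (τ : ℂ) ≠ 0 := by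
    simp only [ne_eq, Complex.ofReal_eq_zero]
    exact ne_of_gt hτ
  suffices H : ∀ m : ℕ, ∑ ii : Fin (m + 1) → Fin nI,
      star (lamhat τ e l (m + 1) ii) * ebr (τ : ℂ) e m * lamhat τ e l (m + 1) ii = 1 by
    intro k hk
    rcases k with _ | m
    · omega
    · simpa using H m
  intro m
  induction m with
  | zero =>
      have hlam : ∀ ii : Fin 1 → Fin nI, lamhat τ e l 1 ii = l (ii 0) := by
        intro ii
        simp [lamhat, descp, List.finRange_succ]
      have hebr0 : ebr (τ : ℂ) e 0 = e 1 := rfl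
      calc ∑ ii : Fin 1 → Fin nI,
            star (lamhat τ e l 1 ii) * ebr (τ : ℂ) e 0 * lamhat τ e l 1 ii
          = ∑ ii : Fin 1 → Fin nI, star (l (ii 0)) * e 1 * l (ii 0) := by
            refine Finset.sum_congr rfl fun ii _ => ?_
            rw [hlam, hebr0]
        _ = ∑ i, star (l i) * e 1 * l i := by
            exact Fintype.sum_equiv (Equiv.funUnique (Fin 1) (Fin nI)) _ _ (fun ii => rfl)
        _ = 1 := hbasis
  | succ k IH =>
      -- abbreviations
      have hmem : ∀ f : Fin (k + 1) → Fin nI, lamhat τ e l (k + 1) f ∈ Mt (k + 1) :=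
        fun f => lamhat_mem hmono hemem hl τ k f
      have hmemS : ∀ f : Fin (k + 1) → Fin nI, star (lamhat τ e l (k + 1) f) ∈ Mt (k + 1) :=
        fun f => star_mem (hmem f)
      have hstarD : star (descp e (k + 1)) = asc e 1 (k + 1) := by
        rw [descp_eq]; exact star_dsc hestar le_rfl (k + 1)
      have hsc : star ((((Real.sqrt τ ^ (k + 1))⁻¹ : ℝ) : ℂ)) =
          (((Real.sqrt τ ^ (k + 1))⁻¹ : ℝ) : ℂ) := by
        rw [Complex.star_def, Complex.conj_ofReal]
      have hcc : (((Real.sqrt τ ^ (k + 1))⁻¹ : ℝ) : ℂ) * (((Real.sqrt τ ^ (k + 1))⁻¹ : ℝ) : ℂ)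
          * ((τ : ℂ) ^ (k + 1))⁻¹ = ((τ : ℂ) ^ (2 * k + 2))⁻¹ := by
        rw [← Complex.ofReal_mul]
        have h1 : ((Real.sqrt τ) ^ (k + 1))⁻¹ * ((Real.sqrt τ) ^ (k + 1))⁻¹
            = (τ ^ (k + 1))⁻¹ := by
          rw [← mul_inv, ← mul_pow, Real.mul_self_sqrt hτ.le]
        rw [h1, Complex.ofReal_inv, Complex.ofReal_pow, ← mul_inv, ← pow_add,
          show (k + 1) + (k + 1) = 2 * k + 2 by omega]
      have hmid : ∀ x y : A, x ∈ Mt (k + 1) → y ∈ Mt (k + 1) →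
          x * (asc e (k + 2) (k + 2) * ebr (τ : ℂ) e k * dsc e (k + 2) (k + 1)) * y
            = asc e (k + 2) (k + 2) * (x * ebr (τ : ℂ) e k * y) * dsc e (k + 2) (k + 1) := by
        intro x y hx hy
        calc x * (asc e (k + 2) (k + 2) * ebr (τ : ℂ) e k * dsc e (k + 2) (k + 1)) * y
            = (x * asc e (k + 2) (k + 2)) * (ebr (τ : ℂ) e k * (dsc e (k + 2) (k + 1) * y)) := by
              simp only [mul_assoc]
          _ = (asc e (k + 2) (k + 2) * x) * (ebr (τ : ℂ) e k * (y * dsc e (k + 2) (k + 1))) := by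
              rw [comm_asc hmono hecomm hx le_rfl (k + 2),
                comm_dsc hmono hecomm hy le_rfl (k + 1)]
          _ = asc e (k + 2) (k + 2) * (x * ebr (τ : ℂ) e k * y) * dsc e (k + 2) (k + 1) := by
              simp only [mul_assoc]
      have hterm : ∀ (a : Fin nI) (f : Fin (k + 1) → Fin nI),
          star (lamhat τ e l (k + 1 + 1) (Fin.snoc f a)) * ebr (τ : ℂ) e (k + 1) *
              lamhat τ e l (k + 1 + 1) (Fin.snoc f a)
            = ((τ : ℂ) ^ (2 * k + 2))⁻¹ • (star (l a) * asc e 1 (k + 1) *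
                (asc e (k + 2) (k + 2) *
                  (star (lamhat τ e l (k + 1) f) * ebr (τ : ℂ) e k * lamhat τ e l (k + 1) f) *
                  dsc e (k + 2) (k + 1)) *
                (descp e (k + 1) * l a)) := by
        intro a f
        rw [lamhat_snoc τ e l (k + 1) f a, ebr_eq (τ : ℂ) e k]
        rw [star_smul, hsc, star_mul, star_mul, hstarD]
        have hbody : (star (l a) * asc e 1 (k + 1)) * star (lamhat τ e l (k + 1) f) *
              (asc e (k + 2) (k + 2) * ebr (τ : ℂ) e k * dsc e (k + 2) (k + 1)) *
              (lamhat τ e l (k + 1) f * (descp e (k + 1) * l a))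
            = star (l a) * asc e 1 (k + 1) *
                (asc e (k + 2) (k + 2) *
                  (star (lamhat τ e l (k + 1) f) * ebr (τ : ℂ) e k * lamhat τ e l (k + 1) f) *
                  dsc e (k + 2) (k + 1)) *
                (descp e (k + 1) * l a) := by
          calc (star (l a) * asc e 1 (k + 1)) * star (lamhat τ e l (k + 1) f) *
                (asc e (k + 2) (k + 2) * ebr (τ : ℂ) e k * dsc e (k + 2) (k + 1)) *
                (lamhat τ e l (k + 1) f * (descp e (k + 1) * l a))
              = (star (l a) * asc e 1 (k + 1)) *
                  (star (lamhat τ e l (k + 1) f) *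
                    (asc e (k + 2) (k + 2) * ebr (τ : ℂ) e k * dsc e (k + 2) (k + 1)) *
                    lamhat τ e l (k + 1) f) *
                  (descp e (k + 1) * l a) := by simp only [mul_assoc]
            _ = (star (l a) * asc e 1 (k + 1)) *
                  (asc e (k + 2) (k + 2) *
                    (star (lamhat τ e l (k + 1) f) * ebr (τ : ℂ) e k * lamhat τ e l (k + 1) f) *
                    dsc e (k + 2) (k + 1)) *
                  (descp e (k + 1) * l a) := by
                rw [hmid _ _ (hmemS f) (hmem f)]
            _ = _ := by simp only [mul_assoc]
        calc ((((Real.sqrt τ ^ (k + 1))⁻¹ : ℝ) : ℂ) •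
                (star (l a) * asc e 1 (k + 1) * star (lamhat τ e l (k + 1) f))) *
              (((τ : ℂ) ^ (k + 1))⁻¹ •
                (asc e (k + 2) (k + 2) * ebr (τ : ℂ) e k * dsc e (k + 2) (k + 1))) *
              ((((Real.sqrt τ ^ (k + 1))⁻¹ : ℝ) : ℂ) •
                (lamhat τ e l (k + 1) f * (descp e (k + 1) * l a)))
            = ((((Real.sqrt τ ^ (k + 1))⁻¹ : ℝ) : ℂ) * (((Real.sqrt τ ^ (k + 1))⁻¹ : ℝ) : ℂ)
                * ((τ : ℂ) ^ (k + 1))⁻¹) •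
                ((star (l a) * asc e 1 (k + 1)) * star (lamhat τ e l (k + 1) f) *
                  (asc e (k + 2) (k + 2) * ebr (τ : ℂ) e k * dsc e (k + 2) (k + 1)) *
                  (lamhat τ e l (k + 1) f * (descp e (k + 1) * l a))) := by
              simp only [smul_mul_assoc, mul_smul_comm, smul_smul, mul_assoc]
              congr 1
              ring
          _ = _ := by rw [hbody, hcc]
      -- the sum manipulation
      have hre : ∀ p : Fin nI × (Fin (k + 1) → Fin nI),
          (Fin.snocEquiv (fun _ : Fin (k + 1 + 1) => Fin nI)) p = Fin.snoc p.2 p.1 := fun p => rfl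
      calc ∑ ii : Fin (k + 1 + 1) → Fin nI,
            star (lamhat τ e l (k + 1 + 1) ii) * ebr (τ : ℂ) e (k + 1) *
              lamhat τ e l (k + 1 + 1) ii
          = ∑ p : Fin nI × (Fin (k + 1) → Fin nI),
              star (lamhat τ e l (k + 1 + 1) (Fin.snoc p.2 p.1)) * ebr (τ : ℂ) e (k + 1) *
                lamhat τ e l (k + 1 + 1) (Fin.snoc p.2 p.1) := by
            exact (Equiv.sum_comp (Fin.snocEquiv (fun _ : Fin (k + 1 + 1) => Fin nI))
              (fun ii => star (lamhat τ e l (k + 1 + 1) ii) * ebr (τ : ℂ) e (k + 1) *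
                lamhat τ e l (k + 1 + 1) ii)).symm
        _ = ∑ a : Fin nI, ∑ f : Fin (k + 1) → Fin nI,
              star (lamhat τ e l (k + 1 + 1) (Fin.snoc f a)) * ebr (τ : ℂ) e (k + 1) *
                lamhat τ e l (k + 1 + 1) (Fin.snoc f a) := by
            rw [Fintype.sum_prod_type]
        _ = ∑ a : Fin nI, star (l a) * e 1 * l a := by
            refine Finset.sum_congr rfl fun a _ => ?_
            have hprod : asc e 1 (k + 1) * (asc e (k + 2) (k + 2) *
                  (dsc e (k + 2) (k + 1) * dsc e 1 (k + 1)))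
                = ((τ : ℂ) ^ (2 * k + 2)) • e 1 := by
              have h1 : asc e 1 (2 * k + 3) = asc e 1 (k + 1) * asc e (k + 2) (k + 2) := by
                have h := asc_concat e 1 (k + 1) (k + 2)
                rw [show (1 : ℕ) + (k + 1) = k + 2 by omega] at h
                rw [show 2 * k + 3 = (k + 1) + (k + 2) by omega]
                exact h
              have h2 : dsc e 1 (2 * k + 2) = dsc e (k + 2) (k + 1) * dsc e 1 (k + 1) := by
                have h := dsc_concat e 1 (k + 1) (k + 1)
                rw [show (1 : ℕ) + (k + 1) = k + 2 by omega] at h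
                rw [show 2 * k + 2 = (k + 1) + (k + 1) by omega]
                exact h
              calc asc e 1 (k + 1) * (asc e (k + 2) (k + 2) *
                    (dsc e (k + 2) (k + 1) * dsc e 1 (k + 1)))
                  = asc e 1 (2 * k + 3) * dsc e 1 (2 * k + 2) := by
                    rw [h1, h2]; simp only [mul_assoc]
                _ = ((τ : ℂ) ^ (2 * k + 2)) • e 1 := by
                    rw [show 2 * k + 3 = (2 * k + 2) + 1 by omega]
                    exact ascdsc (τ : ℂ) hTL1 (2 * k + 2)
            calc ∑ f : Fin (k + 1) → Fin nI,
                  star (lamhat τ e l (k + 1 + 1) (Fin.snoc f a)) * ebr (τ : ℂ) e (k + 1) *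
                    lamhat τ e l (k + 1 + 1) (Fin.snoc f a)
                = ∑ f : Fin (k + 1) → Fin nI,
                    ((τ : ℂ) ^ (2 * k + 2))⁻¹ • (star (l a) * asc e 1 (k + 1) *
                      (asc e (k + 2) (k + 2) *
                        (star (lamhat τ e l (k + 1) f) * ebr (τ : ℂ) e k *
                          lamhat τ e l (k + 1) f) *
                        dsc e (k + 2) (k + 1)) *
                      (descp e (k + 1) * l a)) :=
                  Finset.sum_congr rfl fun f _ => hterm a f
              _ = ((τ : ℂ) ^ (2 * k + 2))⁻¹ • (star (l a) * asc e 1 (k + 1) *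
                    (asc e (k + 2) (k + 2) *
                      (∑ f : Fin (k + 1) → Fin nI,
                        star (lamhat τ e l (k + 1) f) * ebr (τ : ℂ) e k *
                          lamhat τ e l (k + 1) f) *
                      dsc e (k + 2) (k + 1)) *
                    (descp e (k + 1) * l a)) := by
                  symm
                  simp only [Finset.mul_sum, Finset.sum_mul, Finset.smul_sum]
              _ = ((τ : ℂ) ^ (2 * k + 2))⁻¹ • (star (l a) * asc e 1 (k + 1) *
                    (asc e (k + 2) (k + 2) * 1 * dsc e (k + 2) (k + 1)) *
                    (descp e (k + 1) * l a)) := by rw [IH]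
              _ = ((τ : ℂ) ^ (2 * k + 2))⁻¹ •
                    (star (l a) * (asc e 1 (k + 1) * (asc e (k + 2) (k + 2) *
                      (dsc e (k + 2) (k + 1) * dsc e 1 (k + 1)))) * l a) := by
                  rw [mul_one, descp_eq]
                  congr 1
                  simp only [mul_assoc]
              _ = ((τ : ℂ) ^ (2 * k + 2))⁻¹ •
                    (star (l a) * (((τ : ℂ) ^ (2 * k + 2)) • e 1) * l a) := by rw [hprod]
              _ = (((τ : ℂ) ^ (2 * k + 2))⁻¹ * ((τ : ℂ) ^ (2 * k + 2))) •
                    (star (l a) * e 1 * l a) := by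
                  simp only [mul_smul_comm, smul_mul_assoc, smul_smul]
              _ = star (l a) * e 1 * l a := by
                  rw [inv_mul_cancel₀ (pow_ne_zero _ hτc), one_smul]
        _ = 1 := hbasis
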